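/- Let D and S be n×n real symmetric positive semidefinite matrices, E a d×d real symmetric positive definite matrix, A an n×n real matrix, B an n×d real matrix, and C_1, …, C_p n×d real matrices. Set H = E + BᵀSB + Σ_{i=1}^p C_iᵀ S C_i and L = -H⁻¹ Bᵀ S A. Then the Riccati-type update S' = D + AᵀSA - LᵀHL (equivalently S' = D + AᵀSA - AᵀSB H⁻¹ BᵀSA) is symmetric positive semidefinite. -/

import Mathlib

open Matrix

/-- Riccati-type update preserves positive semidefiniteness:
with `H = E + BᵀSB + Σ_i C_iᵀSC_i` and `L = -H⁻¹BᵀSA`, the matrix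
`S' = D + AᵀSA - LᵀHL` is symmetric positive semidefinite. -/
theorem riccati_update_posSemidef {n d p : ℕ}
    (D S : Matrix (Fin n) (Fin n) ℝ) (hD : D.PosSemidef) (hS : S.PosSemidef)
    (E : Matrix (Fin d) (Fin d) ℝ) (hE : E.PosDef)
    (A : Matrix (Fin n) (Fin n) ℝ) (B : Matrix (Fin n) (Fin d) ℝ)
    (C : Fin p → Matrix (Fin n) (Fin d) ℝ) :
    let H := E + Bᵀ * S * B + ∑ i : Fin p, (C i)ᵀ * S * C i
    let L := -(H⁻¹ * Bᵀ * S * A)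
    (D + Aᵀ * S * A - Lᵀ * H * L).PosSemidef := by
  intro H L
  have hSt : Sᵀ = S := by simpa using hS.isHermitian.eq
  -- H is positive definite
  have hsum : (∑ i : Fin p, (C i)ᵀ * S * C i).PosSemidef := by
    refine Finset.sum_induction _ (fun M : Matrix (Fin d) (Fin d) ℝ => M.PosSemidef)
      (fun a b ha hb => ha.add hb) Matrix.PosSemidef.zero (fun i _ => ?_)
    simpa using hS.conjTranspose_mul_mul_same (C i)
  have hBSB : (Bᵀ * S * B).PosSemidef := by
    simpa using hS.conjTranspose_mul_mul_same B
  have hH : H.PosDef := (hE.add_posSemidef hBSB).add_posSemidef hsum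
  have hHherm : Hᵀ = H := hH.1
  haveI : Invertible H := hH.isUnit.invertible
  -- block matrix [[AᵀSA, AᵀSB],[BᵀSA, BᵀSB]] is PSD
  have hblock1 : (fromBlocks (Aᵀ * S * A) (Aᵀ * S * B) (Bᵀ * S * A) (Bᵀ * S * B)).PosSemidef := by
    have := hS.conjTranspose_mul_mul_same (fromCols A B)
    simpa [transpose_fromCols, Matrix.mul_fromCols, fromRows_mul_fromCols,
      Matrix.mul_assoc] using this
  have hblock2 : (fromBlocks (0 : Matrix (Fin n) (Fin n) ℝ) 0 0
      (E + ∑ i : Fin p, (C i)ᵀ * S * C i)).PosSemidef := by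
    have hX : (E + ∑ i : Fin p, (C i)ᵀ * S * C i).PosSemidef :=
      hE.posSemidef.add hsum
    have := hX.conjTranspose_mul_mul_same
      (fromCols (0 : Matrix (Fin d) (Fin n) ℝ) (1 : Matrix (Fin d) (Fin d) ℝ))
    simpa [transpose_fromCols, fromRows_mul, fromRows_mul_fromCols,
      ← fromCols_fromRows_eq_fromBlocks] using this
  have hc : (Aᵀ * S * B)ᴴ = Bᵀ * S * A := by
    simp [conjTranspose_mul, hSt, Matrix.mul_assoc]
  have hblock : (fromBlocks (Aᵀ * S * A) (Aᵀ * S * B) ((Aᵀ * S * B)ᴴ) H).PosSemidef := by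
    rw [hc]
    have h4 : Bᵀ * S * B + (E + ∑ i : Fin p, (C i)ᵀ * S * C i) = H := by
      show _ = E + Bᵀ * S * B + ∑ i : Fin p, (C i)ᵀ * S * C i
      abel
    rw [← h4]
    simpa [Matrix.fromBlocks_add] using hblock1.add hblock2
  -- Schur complement
  have hschur : (Aᵀ * S * A - (Aᵀ * S * B) * H⁻¹ * (Aᵀ * S * B)ᴴ).PosSemidef :=
    (Matrix.PosDef.fromBlocks₂₂ _ _ hH).mp hblock
  -- rewrite LᵀHL
  have hinvT : (H⁻¹)ᵀ = H⁻¹ := by rw [Matrix.transpose_nonsing_inv, hHherm]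
  have hLHL : Lᵀ * H * L = (Aᵀ * S * B) * H⁻¹ * (Aᵀ * S * B)ᴴ := by
    rw [hc]
    show (-(H⁻¹ * Bᵀ * S * A))ᵀ * H * -(H⁻¹ * Bᵀ * S * A) = _
    simp only [transpose_neg, Matrix.neg_mul, Matrix.mul_neg, neg_neg]
    have ht : (H⁻¹ * Bᵀ * S * A)ᵀ = Aᵀ * S * B * H⁻¹ := by
      simp [transpose_mul, hSt, hinvT, Matrix.mul_assoc]
    rw [ht, Matrix.mul_assoc (Aᵀ * S * B) H⁻¹ H, Matrix.inv_mul_of_invertible,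
      Matrix.mul_one]
    simp [Matrix.mul_assoc]
  rw [hLHL, add_sub_assoc]
  exact hD.add hschur
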